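/- Fix positive reals α_1,…,α_N and ρ_1,…,ρ_N, and define Q_ρ = R⁻¹(HR − μ hhᵀ)R⁻¹ with R = diag(ρ), H = diag(α), h = (α_1,…,α_N)ᵀ, μ = (Σ_{i=1}^N α_i/ρ_i)⁻¹. Then Q_ρ is positive semidefinite, Q_ρ𝟙 = 0, and zᵀQ_ρ z = 0 holds only if all components of z are equal; that is, the kernel of Q_ρ is exactly span{𝟙}. -/

import Mathlib

open Matrix

/-- `Q_ρ = R⁻¹ (H R − μ h hᵀ) R⁻¹` with `R = diag(ρ)`, `H = diag(α)`,
`h = α` and `μ = (∑ i, α i / ρ i)⁻¹`. -/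
noncomputable def Qrho {N : ℕ} (α ρ : Fin N → ℝ) : Matrix (Fin N) (Fin N) ℝ :=
  Matrix.diagonal (fun i => (ρ i)⁻¹) *
    (Matrix.diagonal α * Matrix.diagonal ρ
      - (∑ i, α i / ρ i)⁻¹ • Matrix.vecMulVec α α) *
    Matrix.diagonal (fun i => (ρ i)⁻¹)

lemma Qrho_apply {N : ℕ} (α ρ : Fin N → ℝ) (hρ : ∀ i, 0 < ρ i) (i j : Fin N) :
    Qrho α ρ i j = (if i = j then α i / ρ i else 0)
      - (∑ k, α k / ρ k)⁻¹ * (α i / ρ i) * (α j / ρ j) := by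
  have hρi := (hρ i).ne'
  have hρj := (hρ j).ne'
  simp only [Qrho, Matrix.diagonal_mul_diagonal, Matrix.mul_diagonal,
    Matrix.diagonal_mul, Matrix.sub_apply, Matrix.smul_apply,
    Matrix.vecMulVec_apply, Matrix.diagonal_apply, smul_eq_mul]
  generalize (∑ k, α k / ρ k)⁻¹ = μ
  split_ifs with h
  · subst h; field_simp
  · field_simp; ring

lemma Qrho_quad {N : ℕ} (α ρ : Fin N → ℝ) (hρ : ∀ i, 0 < ρ i) (z : Fin N → ℝ) :
    z ⬝ᵥ (Qrho α ρ *ᵥ z) =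
      (∑ i, (α i / ρ i) * z i ^ 2)
        - (∑ k, α k / ρ k)⁻¹ * (∑ i, (α i / ρ i) * z i) ^ 2 := by
  have hmv : ∀ i, (Qrho α ρ *ᵥ z) i
      = (α i / ρ i) * z i
        - (∑ k, α k / ρ k)⁻¹ * (α i / ρ i) * ∑ j, (α j / ρ j) * z j := by
    intro i
    simp only [mulVec, dotProduct, Qrho_apply α ρ hρ, sub_mul, ite_mul, zero_mul,
      Finset.sum_sub_distrib, Finset.sum_ite_eq, Finset.mem_univ, if_true,
      Finset.mul_sum]
    ring_nf
  simp only [dotProduct, hmv, mul_sub]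
  rw [Finset.sum_sub_distrib]
  congr 1
  · exact Finset.sum_congr rfl fun i _ => by ring
  · have h2 : ∀ i, z i * ((∑ k, α k / ρ k)⁻¹ * (α i / ρ i) * ∑ j, (α j / ρ j) * z j)
        = (∑ k, α k / ρ k)⁻¹ * (∑ j, (α j / ρ j) * z j) * ((α i / ρ i) * z i) :=
      fun i => by ring
    simp_rw [h2, ← Finset.mul_sum]
    ring

lemma sum_sum_key {N : ℕ} (b z : Fin N → ℝ) :
    ∑ i, ∑ j, b i * b j * (z i - z j) ^ 2
      = 2 * (∑ i, b i) * (∑ i, b i * z i ^ 2) - 2 * (∑ i, b i * z i) ^ 2 := by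
  have h : ∀ i j, b i * b j * (z i - z j) ^ 2
      = (b i * z i ^ 2) * b j - (2 * (b i * z i)) * (b j * z j)
        + b i * (b j * z j ^ 2) := fun i j => by ring
  simp_rw [h, Finset.sum_add_distrib, Finset.sum_sub_distrib, ← Finset.mul_sum,
    ← Finset.sum_mul, ← Finset.mul_sum]
  ring


/-- For positive `α` and `ρ`, the matrix `Q_ρ` is positive semidefinite,
satisfies `Q_ρ 𝟙 = 0`, and `zᵀ Q_ρ z = 0` forces all components of `z` to be
equal; i.e. the kernel of `Q_ρ` is exactly `span{𝟙}`. -/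
theorem Qrho_psd_kernel
    {N : ℕ} (α ρ : Fin N → ℝ) (hα : ∀ i, 0 < α i) (hρ : ∀ i, 0 < ρ i) :
    (Qrho α ρ).PosSemidef ∧
      Qrho α ρ *ᵥ (fun _ => (1 : ℝ)) = 0 ∧
      ∀ z : Fin N → ℝ, z ⬝ᵥ (Qrho α ρ *ᵥ z) = 0 → ∃ c : ℝ, ∀ i, z i = c := by
  have hb : ∀ i, 0 < α i / ρ i := fun i => div_pos (hα i) (hρ i)
  have hherm : (Qrho α ρ).IsHermitian := by
    ext i j
    simp only [Matrix.conjTranspose_apply, Qrho_apply α ρ hρ, star_trivial]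
    rcases eq_or_ne i j with h | h
    · subst h; ring
    · simp [h, Ne.symm h]; ring
  rcases isEmpty_or_nonempty (Fin N) with hE | hE
  · refine ⟨Matrix.posSemidef_iff_dotProduct_mulVec.mpr ⟨hherm, fun x => ?_⟩, ?_, fun z _ => ⟨0, fun i => (hE.false i).elim⟩⟩
    · simp [dotProduct, Finset.univ_eq_empty]
    · funext i; exact (hE.false i).elim
  · have hS : 0 < ∑ k, α k / ρ k :=
      Finset.sum_pos (fun i _ => hb i) Finset.univ_nonempty
    have hq : ∀ z : Fin N → ℝ, z ⬝ᵥ (Qrho α ρ *ᵥ z)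
        = (2 * ∑ k, α k / ρ k)⁻¹
          * ∑ i, ∑ j, (α i / ρ i) * (α j / ρ j) * (z i - z j) ^ 2 := by
      intro z
      rw [Qrho_quad α ρ hρ z, sum_sum_key (fun i => α i / ρ i) z]
      field_simp
    have hnn : ∀ z : Fin N → ℝ,
        (0:ℝ) ≤ ∑ i, ∑ j, (α i / ρ i) * (α j / ρ j) * (z i - z j) ^ 2 :=
      fun z => Finset.sum_nonneg fun i _ => Finset.sum_nonneg fun j _ =>
        mul_nonneg (mul_nonneg (hb i).le (hb j).le) (sq_nonneg _)
    refine ⟨Matrix.posSemidef_iff_dotProduct_mulVec.mpr ⟨hherm, fun x => ?_⟩, ?_, fun z hz => ?_⟩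
    · have : star x = x := by simp
      rw [this, hq x]
      exact mul_nonneg (by positivity) (hnn x)
    · funext i
      simp only [mulVec, dotProduct, Qrho_apply α ρ hρ, mul_one, sub_mul, ite_mul,
        zero_mul, Finset.sum_sub_distrib, Finset.sum_ite_eq, Finset.mem_univ,
        if_true, Pi.zero_apply]
      have : ∑ j, (∑ k, α k / ρ k)⁻¹ * (α i / ρ i) * (α j / ρ j)
          = (∑ k, α k / ρ k)⁻¹ * (α i / ρ i) * ∑ j, α j / ρ j := by
        rw [Finset.mul_sum]
      rw [this, mul_right_comm, inv_mul_cancel₀ hS.ne', one_mul, sub_self]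
    · rw [hq z] at hz
      have h2S : (2 * ∑ k, α k / ρ k)⁻¹ ≠ 0 := by positivity
      have hsum0 : ∑ i, ∑ j, (α i / ρ i) * (α j / ρ j) * (z i - z j) ^ 2 = 0 := by
        rcases mul_eq_zero.mp hz with h | h
        · exact absurd h h2S
        · exact h
      have hall : ∀ i j : Fin N, z i = z j := by
        intro i j
        have h1 := (Finset.sum_eq_zero_iff_of_nonneg
          (fun i _ => Finset.sum_nonneg fun j _ =>
            mul_nonneg (mul_nonneg (hb i).le (hb j).le) (sq_nonneg _))).mp hsum0
          i (Finset.mem_univ i)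
        have h2 := (Finset.sum_eq_zero_iff_of_nonneg
          (fun j _ => mul_nonneg (mul_nonneg (hb i).le (hb j).le) (sq_nonneg _))).mp h1
          j (Finset.mem_univ j)
        have h3 : (z i - z j) ^ 2 = 0 := by
          have hbb : (α i / ρ i) * (α j / ρ j) ≠ 0 := ne_of_gt (mul_pos (hb i) (hb j))
          exact (mul_eq_zero.mp h2).resolve_left hbb
        have := pow_eq_zero_iff (n := 2) (by norm_num) |>.mp h3
        linarith [sub_eq_zero.mp this]
      obtain ⟨i0⟩ := hE
      exact ⟨z i0, fun i => hall i i0⟩
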